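/- Triangle Poincaré estimate: for every M ≥ 0 there exists a function C₁ : (0,∞) → (0,∞) with C₁(β) → 1 as β ↓ 0 such that the following holds. Let N ≥ 3 and let E_N : S_N → ℝ satisfy ‖∇_a E_N‖_∞ ≤ M for all a ∈ B_N. Then for every β > 0, every triangle T ∈ 𝒯_N with vertex set T̃ = ∪_{a∈T} a, every f : S_N → ℝ, and every σ ∈ S_N, (N/3) Σ_{a,b∈T} π_N^β[ c_a c_b ∇_a f ∇_b f | σ(z) : z ∉ T̃ ](σ) ≥ (C₁(β)/2) Σ_{a∈T} π_N^β[ c_a (∇_a f)² | σ(z) : z ∉ T̃ ](σ). -/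

import Mathlib

open Finset Filter Topology
open scoped BigOperators

attribute [local instance] Classical.propDecidable

namespace PermGibbs
open Equiv

/-- The symmetric group on `{1, …, N}`. -/
abbrev SN (N : ℕ) := Equiv.Perm (Fin N)

/-- `σ^a` for `a = {x,y}`: compose `σ` with the transposition exchanging `x` and `y`. -/
def pexch {N : ℕ} (σ : SN N) (x y : Fin N) : SN N := σ * Equiv.swap x y

/-- The gradient `∇_a f` for `a = {x,y}`. -/
def pgrad {N : ℕ} (f : SN N → ℝ) (x y : Fin N) (σ : SN N) : ℝ := f (pexch σ x y) - f σ

/-- Partition function of the Gibbs measure on `S_N`. -/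
noncomputable def pZ (N : ℕ) (β : ℝ) (E : SN N → ℝ) : ℝ :=
  ∑ σ : SN N, Real.exp (-(β * E σ))

/-- The Gibbs probability `π_N^β`. -/
noncomputable def ppi (N : ℕ) (β : ℝ) (E : SN N → ℝ) (σ : SN N) : ℝ :=
  Real.exp (-(β * E σ)) / pZ N β E

/-- Expectation with respect to `π_N^β`. -/
noncomputable def pexpect (N : ℕ) (β : ℝ) (E : SN N → ℝ) (g : SN N → ℝ) : ℝ :=
  ∑ σ : SN N, ppi N β E σ * g σ

/-- Variance with respect to `π_N^β`. -/
noncomputable def pvar (N : ℕ) (β : ℝ) (E : SN N → ℝ) (f : SN N → ℝ) : ℝ :=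
  pexpect N β E (fun σ => (f σ - pexpect N β E f) ^ 2)

/-- The rates `c_a = (1/N) exp(−(β/2) ∇_a E_N)` for `a = {x,y}`. -/
noncomputable def prate {N : ℕ} (β : ℝ) (E : SN N → ℝ) (x y : Fin N) (σ : SN N) : ℝ :=
  (1 / (N : ℝ)) * Real.exp (-(β / 2) * (E (pexch σ x y) - E σ))

/-- Dirichlet form of the generator `𝒢_N^β` (the sum over unordered pairs is
written as half the sum over ordered distinct pairs). -/
noncomputable def pDir (N : ℕ) (β : ℝ) (E : SN N → ℝ) (f : SN N → ℝ) : ℝ :=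
  (1 / 2) * ((1 / 2) * ∑ x : Fin N, ∑ y : Fin N,
    if x ≠ y then pexpect N β E (fun σ => prate β E x y σ * (pgrad f x y σ) ^ 2) else 0)

/-- The three edges of the triangle on the vertices `u, v, w`. -/
def edges {N : ℕ} (u v w : Fin N) : Fin 3 → Fin N × Fin N := ![(u, v), (v, w), (u, w)]

/-- Conditional expectation of `g` under `π_N^β` given the values of the permutation
outside the vertex set `Tv`: the Gibbs-weighted average of `g` over the permutations
agreeing with `σ` off `Tv`. -/
noncomputable def condExp {N : ℕ} (β : ℝ) (E : SN N → ℝ) (Tv : Finset (Fin N))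
    (g : SN N → ℝ) (σ : SN N) : ℝ :=
  (∑ σ' ∈ Finset.univ.filter (fun σ' : SN N => ∀ z ∉ Tv, σ' z = σ z),
      Real.exp (-(β * E σ')) * g σ') /
    ∑ σ' ∈ Finset.univ.filter (fun σ' : SN N => ∀ z ∉ Tv, σ' z = σ z),
      Real.exp (-(β * E σ'))

lemma coreTiny (m Mp P Q S X Y A1 A2 D : ℝ) (hm : 0 < m)
    (hP3 : 3 * m ≤ P) (hQ3 : 3 * m ≤ Q)
    (hX0 : 0 ≤ X) (hY0 : 0 ≤ Y) (hA1 : 0 ≤ A1) (hA2 : 0 ≤ A2)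
    (hX : X ≤ Mp * A1) (hY : Y ≤ Mp * A2)
    (key : P * Q * S = P * X + Q * Y - D ^ 2) :
    3 * m * (2 * S) ≤ 2 * Mp * (A1 + A2) := by
  have hPpos : 0 < P := lt_of_lt_of_le (by linarith) hP3
  have hQpos : 0 < Q := lt_of_lt_of_le (by linarith) hQ3
  have e1 : 6 * m * (P * Q * S) ≤ 6 * m * (P * X + Q * Y) :=
    mul_le_mul_of_nonneg_left (by linarith [sq_nonneg D]) (by linarith)
  have e2a : 0 ≤ (2 * Q - 6 * m) * (P * X) :=
    mul_nonneg (by linarith) (mul_nonneg hPpos.le hX0)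
  have e2b : 0 ≤ (2 * P - 6 * m) * (Q * Y) :=
    mul_nonneg (by linarith) (mul_nonneg hQpos.le hY0)
  have e3 : 2 * Q * (P * X) ≤ 2 * Q * (P * (Mp * A1)) :=
    mul_le_mul_of_nonneg_left (mul_le_mul_of_nonneg_left hX hPpos.le) (by linarith)
  have e4 : 2 * P * (Q * Y) ≤ 2 * P * (Q * (Mp * A2)) :=
    mul_le_mul_of_nonneg_left (mul_le_mul_of_nonneg_left hY hQpos.le) (by linarith)
  have hfin : (P * Q) * (3 * m * (2 * S)) ≤ (P * Q) * (2 * Mp * (A1 + A2)) := by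
    nlinarith [e1, e2a, e2b, e3, e4]
  exact le_of_mul_le_mul_left hfin (mul_pos hPpos hQpos)

lemma core33 (m Mp p1 p2 p3 q1 q2 q3 a1 a2 a3 b1 b2 b3 : ℝ) (hm : 0 < m)
    (hp1 : m ≤ p1) (hp1' : p1 ≤ Mp) (hp2 : m ≤ p2) (hp2' : p2 ≤ Mp)
    (hp3 : m ≤ p3) (hp3' : p3 ≤ Mp) (hq1 : m ≤ q1) (hq1' : q1 ≤ Mp)
    (hq2 : m ≤ q2) (hq2' : q2 ≤ Mp) (hq3 : m ≤ q3) (hq3' : q3 ≤ Mp) :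
    3 * m * (p1 * (q1 * (b1 - a1) ^ 2 + q2 * (b2 - a1) ^ 2 + q3 * (b3 - a1) ^ 2) +
        p2 * (q1 * (b1 - a2) ^ 2 + q2 * (b2 - a2) ^ 2 + q3 * (b3 - a2) ^ 2) +
        p3 * (q1 * (b1 - a3) ^ 2 + q2 * (b2 - a3) ^ 2 + q3 * (b3 - a3) ^ 2) +
        q1 * (p1 * (a1 - b1) ^ 2 + p2 * (a2 - b1) ^ 2 + p3 * (a3 - b1) ^ 2) +
        q2 * (p1 * (a1 - b2) ^ 2 + p2 * (a2 - b2) ^ 2 + p3 * (a3 - b2) ^ 2) +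
        q3 * (p1 * (a1 - b3) ^ 2 + p2 * (a2 - b3) ^ 2 + p3 * (a3 - b3) ^ 2)) ≤
      2 * Mp * ((q1 * (b1 - a1) + q2 * (b2 - a1) + q3 * (b3 - a1)) ^ 2 +
        (q1 * (b1 - a2) + q2 * (b2 - a2) + q3 * (b3 - a2)) ^ 2 +
        (q1 * (b1 - a3) + q2 * (b2 - a3) + q3 * (b3 - a3)) ^ 2 +
        ((p1 * (a1 - b1) + p2 * (a2 - b1) + p3 * (a3 - b1)) ^ 2 +
        (p1 * (a1 - b2) + p2 * (a2 - b2) + p3 * (a3 - b2)) ^ 2 +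
        (p1 * (a1 - b3) + p2 * (a2 - b3) + p3 * (a3 - b3)) ^ 2)) := by
  have hm1 : (0:ℝ) ≤ p1 := le_trans hm.le hp1
  have hm2 : (0:ℝ) ≤ p2 := le_trans hm.le hp2
  have hm3 : (0:ℝ) ≤ p3 := le_trans hm.le hp3
  have hn1 : (0:ℝ) ≤ q1 := le_trans hm.le hq1
  have hn2 : (0:ℝ) ≤ q2 := le_trans hm.le hq2
  have hn3 : (0:ℝ) ≤ q3 := le_trans hm.le hq3
  have main := coreTiny m Mp (p1 + p2 + p3) (q1 + q2 + q3)
    (p1 * q1 * (a1 - b1) ^ 2 + p1 * q2 * (a1 - b2) ^ 2 + p1 * q3 * (a1 - b3) ^ 2 +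
      p2 * q1 * (a2 - b1) ^ 2 + p2 * q2 * (a2 - b2) ^ 2 + p2 * q3 * (a2 - b3) ^ 2 +
      p3 * q1 * (a3 - b1) ^ 2 + p3 * q2 * (a3 - b2) ^ 2 + p3 * q3 * (a3 - b3) ^ 2)
    (p1 * (q1 * (b1 - a1) + q2 * (b2 - a1) + q3 * (b3 - a1)) ^ 2 +
      p2 * (q1 * (b1 - a2) + q2 * (b2 - a2) + q3 * (b3 - a2)) ^ 2 +
      p3 * (q1 * (b1 - a3) + q2 * (b2 - a3) + q3 * (b3 - a3)) ^ 2)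
    (q1 * (p1 * (a1 - b1) + p2 * (a2 - b1) + p3 * (a3 - b1)) ^ 2 +
      q2 * (p1 * (a1 - b2) + p2 * (a2 - b2) + p3 * (a3 - b2)) ^ 2 +
      q3 * (p1 * (a1 - b3) + p2 * (a2 - b3) + p3 * (a3 - b3)) ^ 2)
    ((q1 * (b1 - a1) + q2 * (b2 - a1) + q3 * (b3 - a1)) ^ 2 +
      (q1 * (b1 - a2) + q2 * (b2 - a2) + q3 * (b3 - a2)) ^ 2 +
      (q1 * (b1 - a3) + q2 * (b2 - a3) + q3 * (b3 - a3)) ^ 2)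
    ((p1 * (a1 - b1) + p2 * (a2 - b1) + p3 * (a3 - b1)) ^ 2 +
      (p1 * (a1 - b2) + p2 * (a2 - b2) + p3 * (a3 - b2)) ^ 2 +
      (p1 * (a1 - b3) + p2 * (a2 - b3) + p3 * (a3 - b3)) ^ 2)
    ((q1 + q2 + q3) * (p1 * a1 + p2 * a2 + p3 * a3) -
      (p1 + p2 + p3) * (q1 * b1 + q2 * b2 + q3 * b3)) hm
    (by linarith) (by linarith)
    (by positivity) (by positivity) (by positivity) (by positivity)
    (by
      have h1 := mul_le_mul_of_nonneg_right hp1' (sq_nonneg (q1 * (b1 - a1) + q2 * (b2 - a1) + q3 * (b3 - a1)))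
      have h2 := mul_le_mul_of_nonneg_right hp2' (sq_nonneg (q1 * (b1 - a2) + q2 * (b2 - a2) + q3 * (b3 - a2)))
      have h3 := mul_le_mul_of_nonneg_right hp3' (sq_nonneg (q1 * (b1 - a3) + q2 * (b2 - a3) + q3 * (b3 - a3)))
      linarith)
    (by
      have h1 := mul_le_mul_of_nonneg_right hq1' (sq_nonneg (p1 * (a1 - b1) + p2 * (a2 - b1) + p3 * (a3 - b1)))
      have h2 := mul_le_mul_of_nonneg_right hq2' (sq_nonneg (p1 * (a1 - b2) + p2 * (a2 - b2) + p3 * (a3 - b2)))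
      have h3 := mul_le_mul_of_nonneg_right hq3' (sq_nonneg (p1 * (a1 - b3) + p2 * (a2 - b3) + p3 * (a3 - b3)))
      linarith)
    (by ring)
  calc 3 * m * (p1 * (q1 * (b1 - a1) ^ 2 + q2 * (b2 - a1) ^ 2 + q3 * (b3 - a1) ^ 2) +
        p2 * (q1 * (b1 - a2) ^ 2 + q2 * (b2 - a2) ^ 2 + q3 * (b3 - a2) ^ 2) +
        p3 * (q1 * (b1 - a3) ^ 2 + q2 * (b2 - a3) ^ 2 + q3 * (b3 - a3) ^ 2) +
        q1 * (p1 * (a1 - b1) ^ 2 + p2 * (a2 - b1) ^ 2 + p3 * (a3 - b1) ^ 2) +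
        q2 * (p1 * (a1 - b2) ^ 2 + p2 * (a2 - b2) ^ 2 + p3 * (a3 - b2) ^ 2) +
        q3 * (p1 * (a1 - b3) ^ 2 + p2 * (a2 - b3) ^ 2 + p3 * (a3 - b3) ^ 2))
      = 3 * m * (2 * (p1 * q1 * (a1 - b1) ^ 2 + p1 * q2 * (a1 - b2) ^ 2 + p1 * q3 * (a1 - b3) ^ 2 +
      p2 * q1 * (a2 - b1) ^ 2 + p2 * q2 * (a2 - b2) ^ 2 + p2 * q3 * (a2 - b3) ^ 2 +
      p3 * q1 * (a3 - b1) ^ 2 + p3 * q2 * (a3 - b2) ^ 2 + p3 * q3 * (a3 - b3) ^ 2)) := by ring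
    _ ≤ _ := main


namespace PermTest

variable {N : ℕ} {u v w : Fin N}

open Equiv

lemma six_classify (huv : u ≠ v) (huw : u ≠ w) (hvw : v ≠ w)
    (g : Equiv.Perm (Fin N)) (hg : ∀ z, z ≠ u → z ≠ v → z ≠ w → g z = z) :
    g = 1 ∨ g = swap u v ∨ g = swap v w ∨ g = swap u w ∨
      g = swap u v * swap v w ∨ g = swap v w * swap u v := by
  have hmem : ∀ x, x = u ∨ x = v ∨ x = w → g x = u ∨ g x = v ∨ g x = w := by
    intro x hx
    by_contra h
    push_neg at h
    obtain ⟨h1, h2, h3⟩ := h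
    have h4 : g (g x) = g x := hg (g x) h1 h2 h3
    have h5 : g x = x := g.injective h4
    rcases hx with rfl | rfl | rfl
    · exact h1 h5
    · exact h2 h5
    · exact h3 h5
  have hgu := hmem u (Or.inl rfl)
  have hgv := hmem v (Or.inr (Or.inl rfl))
  have hgw := hmem w (Or.inr (Or.inr rfl))
  have hext : ∀ h : Equiv.Perm (Fin N), g u = h u → g v = h v → g w = h w →
      (∀ z, z ≠ u → z ≠ v → z ≠ w → h z = z) → g = h := by
    intro h h1 h2 h3 hfix
    ext z
    by_cases hzu : z = u
    · rw [hzu, h1]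
    by_cases hzv : z = v
    · rw [hzv, h2]
    by_cases hzw : z = w
    · rw [hzw, h3]
    rw [hg z hzu hzv hzw, hfix z hzu hzv hzw]
  have guv : g u ≠ g v := fun h => huv (g.injective h)
  have guw : g u ≠ g w := fun h => huw (g.injective h)
  have gvw : g v ≠ g w := fun h => hvw (g.injective h)
  -- values of the two 3-cycles
  have c1u : (swap u v * swap v w : Equiv.Perm (Fin N)) u = v := by
    rw [Equiv.Perm.mul_apply, swap_apply_of_ne_of_ne huv huw, swap_apply_left]
  have c1v : (swap u v * swap v w : Equiv.Perm (Fin N)) v = w := by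
    rw [Equiv.Perm.mul_apply, swap_apply_left, swap_apply_of_ne_of_ne (Ne.symm huw) (Ne.symm hvw)]
  have c1w : (swap u v * swap v w : Equiv.Perm (Fin N)) w = u := by
    rw [Equiv.Perm.mul_apply, swap_apply_right, swap_apply_right]
  have c2u : (swap v w * swap u v : Equiv.Perm (Fin N)) u = w := by
    rw [Equiv.Perm.mul_apply, swap_apply_left, swap_apply_left]
  have c2v : (swap v w * swap u v : Equiv.Perm (Fin N)) v = u := by
    rw [Equiv.Perm.mul_apply, swap_apply_right, swap_apply_of_ne_of_ne huv huw]
  have c2w : (swap v w * swap u v : Equiv.Perm (Fin N)) w = v := by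
    rw [Equiv.Perm.mul_apply, swap_apply_of_ne_of_ne (Ne.symm huw) (Ne.symm hvw), swap_apply_right]
  have c1fix : ∀ z, z ≠ u → z ≠ v → z ≠ w → (swap u v * swap v w : Equiv.Perm (Fin N)) z = z := by
    intro z h1 h2 h3
    rw [Equiv.Perm.mul_apply, swap_apply_of_ne_of_ne h2 h3, swap_apply_of_ne_of_ne h1 h2]
  have c2fix : ∀ z, z ≠ u → z ≠ v → z ≠ w → (swap v w * swap u v : Equiv.Perm (Fin N)) z = z := by
    intro z h1 h2 h3
    rw [Equiv.Perm.mul_apply, swap_apply_of_ne_of_ne h1 h2, swap_apply_of_ne_of_ne h2 h3]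
  rcases hgu with hu1 | hu1 | hu1
  · rcases hgv with hv1 | hv1 | hv1
    · exact (guv (hu1.trans hv1.symm)).elim
    · left
      refine hext 1 (by simpa using hu1) (by simpa using hv1) ?_ (fun z _ _ _ => rfl)
      rcases hgw with hw1 | hw1 | hw1
      · exact (guw (hu1.trans hw1.symm)).elim
      · exact (gvw (hv1.trans hw1.symm)).elim
      · simpa using hw1
    · right; right; left
      refine hext (swap v w) ?_ ?_ ?_ (fun z _ h2 h3 => swap_apply_of_ne_of_ne h2 h3)
      · rw [hu1, swap_apply_of_ne_of_ne huv huw]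
      · rw [hv1, swap_apply_left]
      · rcases hgw with hw1 | hw1 | hw1
        · exact (guw (hu1.trans hw1.symm)).elim
        · rw [hw1, swap_apply_right]
        · exact (gvw (hv1.trans hw1.symm)).elim
  · rcases hgv with hv1 | hv1 | hv1
    · right; left
      refine hext (swap u v) ?_ ?_ ?_ (fun z h1 h2 _ => swap_apply_of_ne_of_ne h1 h2)
      · rw [hu1, swap_apply_left]
      · rw [hv1, swap_apply_right]
      · rcases hgw with hw1 | hw1 | hw1
        · exact (gvw (hv1.trans hw1.symm)).elim
        · exact (guw (hu1.trans hw1.symm)).elim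
        · rw [hw1, swap_apply_of_ne_of_ne (Ne.symm huw) (Ne.symm hvw)]
    · exact (guv (hu1.trans hv1.symm)).elim
    · right; right; right; right; left
      refine hext (swap u v * swap v w) (by rw [hu1, c1u]) (by rw [hv1, c1v]) ?_ c1fix
      rcases hgw with hw1 | hw1 | hw1
      · rw [hw1, c1w]
      · exact (guw (hu1.trans hw1.symm)).elim
      · exact (gvw (hv1.trans hw1.symm)).elim
  · rcases hgv with hv1 | hv1 | hv1
    · right; right; right; right; right
      refine hext (swap v w * swap u v) (by rw [hu1, c2u]) (by rw [hv1, c2v]) ?_ c2fix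
      rcases hgw with hw1 | hw1 | hw1
      · exact (gvw (hv1.trans hw1.symm)).elim
      · rw [hw1, c2w]
      · exact (guw (hu1.trans hw1.symm)).elim
    · right; right; right; left
      refine hext (swap u w) ?_ ?_ ?_ (fun z h1 _ h3 => swap_apply_of_ne_of_ne h1 h3)
      · rw [hu1, swap_apply_left]
      · rw [hv1, swap_apply_of_ne_of_ne (Ne.symm huv) hvw]
      · rcases hgw with hw1 | hw1 | hw1
        · rw [hw1, swap_apply_right]
        · exact (gvw (hv1.trans hw1.symm)).elim
        · exact (guw (hu1.trans hw1.symm)).elim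
    · exact (guv (hu1.trans hv1.symm)).elim

end PermTest

namespace Part2
open Equiv
variable {N : ℕ} {u v w : Fin N}

lemma mul_ne (σ g h : Equiv.Perm (Fin N)) (x : Fin N) (hx : g x ≠ h x) : σ * g ≠ σ * h := by
  intro he
  apply hx
  have : (σ * g) x = (σ * h) x := by rw [he]
  simpa using σ.injective (by simpa [Equiv.Perm.mul_apply] using this)

lemma s1u : swap u v u = v := swap_apply_left u v
lemma s1v : swap u v v = u := swap_apply_right u v
lemma s1w (huw : u ≠ w) (hvw : v ≠ w) : swap u v w = w :=
  swap_apply_of_ne_of_ne (Ne.symm huw) (Ne.symm hvw)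
lemma s2u (huv : u ≠ v) (huw : u ≠ w) : swap v w u = u := swap_apply_of_ne_of_ne huv huw
lemma s2v : swap v w v = w := swap_apply_left v w
lemma s2w : swap v w w = v := swap_apply_right v w
lemma s3u : swap u w u = w := swap_apply_left u w
lemma s3v (huv : u ≠ v) (hvw : v ≠ w) : swap u w v = v :=
  swap_apply_of_ne_of_ne (Ne.symm huv) hvw
lemma s3w : swap u w w = u := swap_apply_right u w
lemma c1u (huv : u ≠ v) (huw : u ≠ w) : (swap u v * swap v w : Equiv.Perm (Fin N)) u = v := by
  rw [Equiv.Perm.mul_apply, s2u huv huw, s1u]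
lemma c1v (huw : u ≠ w) (hvw : v ≠ w) : (swap u v * swap v w : Equiv.Perm (Fin N)) v = w := by
  rw [Equiv.Perm.mul_apply, s2v, s1w huw hvw]
lemma c1w : (swap u v * swap v w : Equiv.Perm (Fin N)) w = u := by
  rw [Equiv.Perm.mul_apply, s2w, s1v]
lemma c2u : (swap v w * swap u v : Equiv.Perm (Fin N)) u = w := by
  rw [Equiv.Perm.mul_apply, s1u, s2v]
lemma c2v (huv : u ≠ v) (huw : u ≠ w) : (swap v w * swap u v : Equiv.Perm (Fin N)) v = u := by
  rw [Equiv.Perm.mul_apply, s1v, s2u huv huw]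
lemma c2w (huw : u ≠ w) (hvw : v ≠ w) : (swap v w * swap u v : Equiv.Perm (Fin N)) w = v := by
  rw [Equiv.Perm.mul_apply, s1w huw hvw, s2w]

lemma fiber_eq (huv : u ≠ v) (huw : u ≠ w) (hvw : v ≠ w) (σ : Equiv.Perm (Fin N)) :
    Finset.univ.filter (fun τ : Equiv.Perm (Fin N) =>
        ∀ z ∉ ({u, v, w} : Finset (Fin N)), τ z = σ z) =
      {σ, σ * swap u v, σ * swap v w, σ * swap u w,
        σ * swap u v * swap v w, σ * swap v w * swap u v} := by
  ext τ
  simp only [Finset.mem_filter, Finset.mem_univ, true_and, Finset.mem_insert,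
    Finset.mem_singleton]
  constructor
  · intro h
    have hg : ∀ z, z ≠ u → z ≠ v → z ≠ w → (σ⁻¹ * τ) z = z := by
      intro z h1 h2 h3
      have hz := h z (by simp [h1, h2, h3])
      rw [Equiv.Perm.mul_apply, hz, Equiv.Perm.inv_def, Equiv.symm_apply_apply]
    have hcl := PermTest.six_classify huv huw hvw (σ⁻¹ * τ) hg
    have hback : σ * (σ⁻¹ * τ) = τ := by group
    rcases hcl with hc | hc | hc | hc | hc | hc
    · left; rw [← hback, hc, mul_one]
    · right; left; rw [← hback, hc]
    · right; right; left; rw [← hback, hc]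
    · right; right; right; left; rw [← hback, hc]
    · right; right; right; right; left; rw [← hback, hc, ← mul_assoc]
    · right; right; right; right; right; rw [← hback, hc, ← mul_assoc]
  · intro h z hz
    have h1 : z ≠ u := fun e => hz (by simp [e])
    have h2 : z ≠ v := fun e => hz (by simp [e])
    have h3 : z ≠ w := fun e => hz (by simp [e])
    rcases h with rfl | rfl | rfl | rfl | rfl | rfl
    · rfl
    · rw [Equiv.Perm.mul_apply, swap_apply_of_ne_of_ne h1 h2]
    · rw [Equiv.Perm.mul_apply, swap_apply_of_ne_of_ne h2 h3]
    · rw [Equiv.Perm.mul_apply, swap_apply_of_ne_of_ne h1 h3]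
    · rw [Equiv.Perm.mul_apply, swap_apply_of_ne_of_ne h2 h3,
        Equiv.Perm.mul_apply, swap_apply_of_ne_of_ne h1 h2]
    · rw [Equiv.Perm.mul_apply, swap_apply_of_ne_of_ne h1 h2,
        Equiv.Perm.mul_apply, swap_apply_of_ne_of_ne h2 h3]

lemma fiber_sum (huv : u ≠ v) (huw : u ≠ w) (hvw : v ≠ w) (σ : Equiv.Perm (Fin N))
    (g : Equiv.Perm (Fin N) → ℝ) :
    ∑ τ ∈ ({σ, σ * swap u v, σ * swap v w, σ * swap u w,
        σ * swap u v * swap v w, σ * swap v w * swap u v} : Finset (Equiv.Perm (Fin N))), g τ =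
      g σ + g (σ * swap u v) + g (σ * swap v w) + g (σ * swap u w) +
        g (σ * swap u v * swap v w) + g (σ * swap v w * swap u v) := by
  have n12 : σ ≠ σ * swap u v := by
    nth_rewrite 1 [← mul_one σ]
    exact mul_ne σ 1 _ u (by rw [Equiv.Perm.one_apply, s1u]; exact huv)
  have n13 : σ ≠ σ * swap v w := by
    nth_rewrite 1 [← mul_one σ]
    exact mul_ne σ 1 _ v (by rw [Equiv.Perm.one_apply, s2v]; exact hvw)
  have n14 : σ ≠ σ * swap u w := by
    nth_rewrite 1 [← mul_one σ]
    exact mul_ne σ 1 _ u (by rw [Equiv.Perm.one_apply, s3u]; exact huw)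
  have n15 : σ ≠ σ * swap u v * swap v w := by
    nth_rewrite 1 [← mul_one σ]
    rw [mul_assoc]
    exact mul_ne σ 1 _ u (by rw [Equiv.Perm.one_apply, c1u huv huw]; exact huv)
  have n16 : σ ≠ σ * swap v w * swap u v := by
    nth_rewrite 1 [← mul_one σ]
    rw [mul_assoc]
    exact mul_ne σ 1 _ u (by rw [Equiv.Perm.one_apply, c2u]; exact huw)
  have n23 : σ * swap u v ≠ σ * swap v w :=
    mul_ne σ _ _ u (by rw [s1u, s2u huv huw]; exact Ne.symm huv)
  have n24 : σ * swap u v ≠ σ * swap u w :=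
    mul_ne σ _ _ u (by rw [s1u, s3u]; exact hvw)
  have n25 : σ * swap u v ≠ σ * swap u v * swap v w := by
    rw [mul_assoc]
    exact mul_ne σ _ _ v (by rw [s1v, c1v huw hvw]; exact huw)
  have n26 : σ * swap u v ≠ σ * swap v w * swap u v := by
    rw [mul_assoc]
    exact mul_ne σ _ _ u (by rw [s1u, c2u]; exact hvw)
  have n34 : σ * swap v w ≠ σ * swap u w :=
    mul_ne σ _ _ u (by rw [s2u huv huw, s3u]; exact huw)
  have n35 : σ * swap v w ≠ σ * swap u v * swap v w := by
    rw [mul_assoc]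
    exact mul_ne σ _ _ u (by rw [s2u huv huw, c1u huv huw]; exact huv)
  have n36 : σ * swap v w ≠ σ * swap v w * swap u v := by
    rw [mul_assoc]
    exact mul_ne σ _ _ u (by rw [s2u huv huw, c2u]; exact huw)
  have n45 : σ * swap u w ≠ σ * swap u v * swap v w := by
    rw [mul_assoc]
    exact mul_ne σ _ _ u (by rw [s3u, c1u huv huw]; exact Ne.symm hvw)
  have n46 : σ * swap u w ≠ σ * swap v w * swap u v := by
    rw [mul_assoc]
    exact mul_ne σ _ _ v (by rw [s3v huv hvw, c2v huv huw]; exact Ne.symm huv)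
  have n56 : σ * swap u v * swap v w ≠ σ * swap v w * swap u v := by
    rw [mul_assoc, mul_assoc]
    exact mul_ne σ _ _ u (by rw [c1u huv huw, c2u]; exact hvw)
  rw [Finset.sum_insert (by simp [n12, n13, n14, n15, n16]),
    Finset.sum_insert (by simp [n23, n24, n25, n26]),
    Finset.sum_insert (by simp [n34, n35, n36]),
    Finset.sum_insert (by simp [n45, n46]),
    Finset.sum_insert (by simp [n56]), Finset.sum_singleton]
  ring

end Part2


namespace Main

variable {N : ℕ} {u v w : Fin N}

-- group relations
lemma relA (huv : u ≠ v) (huw : u ≠ w) (hvw : v ≠ w) :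
    (swap u v * swap u w : Equiv.Perm (Fin N)) = swap v w * swap u v := by
  have h := swap_mul_swap_mul_swap (x := w) (y := u) (z := v) (Ne.symm huw) (Ne.symm hvw)
  -- swap u v * swap w u * swap u v = swap v w
  have h2 : (swap u v * swap u w * swap u v : Equiv.Perm (Fin N)) = swap v w := by
    rw [swap_comm u w]; exact h
  calc (swap u v * swap u w : Equiv.Perm (Fin N))
      = (swap u v * swap u w * swap u v) * swap u v := by
        rw [mul_assoc, swap_mul_self, mul_one]
    _ = swap v w * swap u v := by rw [h2]

lemma relB (huv : u ≠ v) (huw : u ≠ w) (hvw : v ≠ w) :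
    (swap v w * swap u w : Equiv.Perm (Fin N)) = swap u v * swap v w := by
  have h := swap_mul_swap_mul_swap (x := u) (y := v) (z := w) huv huw
  -- swap v w * swap u v * swap v w = swap w u
  have h2 : (swap v w * swap u v * swap v w : Equiv.Perm (Fin N)) = swap u w := by
    rw [h]; exact swap_comm w u
  calc (swap v w * swap u w : Equiv.Perm (Fin N))
      = swap v w * (swap v w * swap u v * swap v w) := by rw [h2]
    _ = swap u v * swap v w := by
        rw [← mul_assoc, ← mul_assoc, swap_mul_self, one_mul]

lemma relC (huv : u ≠ v) (huw : u ≠ w) (hvw : v ≠ w) :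
    (swap u w * swap u v : Equiv.Perm (Fin N)) = swap u v * swap v w := by
  -- from swap u v * swap w u * swap u v = swap v w
  have h := swap_mul_swap_mul_swap (x := w) (y := u) (z := v) (Ne.symm huw) (Ne.symm hvw)
  have h2 : (swap u v * swap u w * swap u v : Equiv.Perm (Fin N)) = swap v w := by
    rw [swap_comm u w]; exact h
  calc (swap u w * swap u v : Equiv.Perm (Fin N))
      = swap u v * (swap u v * swap u w * swap u v) := by
        rw [← mul_assoc, ← mul_assoc, swap_mul_self, one_mul]
    _ = swap u v * swap v w := by rw [h2]

lemma relD (huv : u ≠ v) (huw : u ≠ w) (hvw : v ≠ w) :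
    (swap u w * swap v w : Equiv.Perm (Fin N)) = swap v w * swap u v := by
  have h := swap_mul_swap_mul_swap (x := u) (y := v) (z := w) huv huw
  have h2 : (swap v w * swap u v * swap v w : Equiv.Perm (Fin N)) = swap u w := by
    rw [h]; exact swap_comm w u
  calc (swap u w * swap v w : Equiv.Perm (Fin N))
      = swap v w * swap u v * (swap v w * swap v w) := by rw [← h2]; group
    _ = swap v w * swap u v := by rw [swap_mul_self, mul_one]

lemma relE (huv : u ≠ v) (huw : u ≠ w) (hvw : v ≠ w) :
    (swap u v * (swap v w * swap u v) : Equiv.Perm (Fin N)) = swap u w := by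
  have h := relC (N := N) huv huw hvw
  calc (swap u v * (swap v w * swap u v) : Equiv.Perm (Fin N))
      = (swap u v * swap v w) * swap u v := by rw [mul_assoc]
    _ = (swap u w * swap u v) * swap u v := by rw [h]
    _ = swap u w := by rw [mul_assoc, swap_mul_self, mul_one]

lemma relG (huv : u ≠ v) (huw : u ≠ w) (hvw : v ≠ w) :
    (swap v w * (swap u v * swap v w) : Equiv.Perm (Fin N)) = swap u w := by
  have h := swap_mul_swap_mul_swap (x := u) (y := v) (z := w) huv huw
  have h2 : (swap v w * swap u v * swap v w : Equiv.Perm (Fin N)) = swap u w := by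
    rw [h]; exact swap_comm w u
  rw [← h2, mul_assoc]

lemma expmono {β a b : ℝ} (hβ : 0 < β) (h : b ≤ a) :
    Real.exp (-(β / 2 * a)) ≤ Real.exp (-(β / 2 * b)) :=
  Real.exp_le_exp.mpr (by nlinarith)

lemma merge1 (n β ek el d : ℝ) :
    Real.exp (-(β * ek)) * (1 / n * (Real.exp (-(β / 2) * (el - ek)) * d)) =
      1 / n * (Real.exp (-(β / 2 * ek)) * Real.exp (-(β / 2 * el)) * d) := by
  calc Real.exp (-(β * ek)) * (1 / n * (Real.exp (-(β / 2) * (el - ek)) * d))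
      = 1 / n * (Real.exp (-(β * ek)) * Real.exp (-(β / 2) * (el - ek)) * d) := by ring
    _ = 1 / n * (Real.exp (-(β * ek) + -(β / 2) * (el - ek)) * d) := by rw [← Real.exp_add]
    _ = 1 / n * (Real.exp (-(β / 2 * ek) + -(β / 2 * el)) * d) := by
        rw [show -(β * ek) + -(β / 2) * (el - ek) = -(β / 2 * ek) + -(β / 2 * el) by ring]
    _ = 1 / n * (Real.exp (-(β / 2 * ek)) * Real.exp (-(β / 2 * el)) * d) := by
        rw [Real.exp_add]

lemma merge2 (n β ek ei ej d : ℝ) :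
    Real.exp (-(β * ek)) * (1 / n * (Real.exp (-(β / 2) * (ei - ek)) *
        (1 / n * (Real.exp (-(β / 2) * (ej - ek)) * d)))) =
      1 / n * (1 / n * (Real.exp (-(β / 2 * ei)) * Real.exp (-(β / 2 * ej)) * d)) := by
  calc Real.exp (-(β * ek)) * (1 / n * (Real.exp (-(β / 2) * (ei - ek)) *
        (1 / n * (Real.exp (-(β / 2) * (ej - ek)) * d))))
      = 1 / n * (1 / n * (Real.exp (-(β * ek)) * Real.exp (-(β / 2) * (ei - ek)) *
          Real.exp (-(β / 2) * (ej - ek)) * d)) := by ring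
    _ = 1 / n * (1 / n * (Real.exp (-(β * ek) + -(β / 2) * (ei - ek) + -(β / 2) * (ej - ek)) * d)) := by
        rw [← Real.exp_add, ← Real.exp_add]
    _ = 1 / n * (1 / n * (Real.exp (-(β / 2 * ei) + -(β / 2 * ej)) * d)) := by
        rw [show -(β * ek) + -(β / 2) * (ei - ek) + -(β / 2) * (ej - ek)
          = -(β / 2 * ei) + -(β / 2 * ej) by ring]
    _ = 1 / n * (1 / n * (Real.exp (-(β / 2 * ei)) * Real.exp (-(β / 2 * ej)) * d)) := by
        rw [Real.exp_add]


end Main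

set_option maxHeartbeats 4000000 in
/-- Triangle Poincaré estimate: for every `M ≥ 0` there is a
function `C₁` with `C₁(β) → 1` as `β ↓ 0` such that for every `N ≥ 3`, every energy
with gradients bounded by `M`, every `β > 0`, every triangle `T` (with vertices
`u, v, w`), every `f` and every `σ`,
`(N/3) Σ_{a,b∈T} π[c_a c_b ∇_a f ∇_b f | σ off T̃] ≥ (C₁(β)/2) Σ_{a∈T} π[c_a (∇_a f)² | σ off T̃]`. -/
theorem triangle_poincare (M : ℝ) (hM : 0 ≤ M) :
    ∃ C₁ : ℝ → ℝ, (∀ β : ℝ, 0 < β → 0 < C₁ β) ∧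
      Filter.Tendsto C₁ (nhdsWithin (0 : ℝ) (Set.Ioi 0)) (nhds 1) ∧
      ∀ N : ℕ, 3 ≤ N → ∀ E : SN N → ℝ,
        (∀ x y : Fin N, ∀ σ : SN N, |E (pexch σ x y) - E σ| ≤ M) →
        ∀ β : ℝ, 0 < β → ∀ u v w : Fin N, u ≠ v → u ≠ w → v ≠ w →
          ∀ f : SN N → ℝ, ∀ σ : SN N,
            (C₁ β / 2) * ∑ i : Fin 3,
                condExp β E {u, v, w}
                  (fun τ => prate β E (edges u v w i).1 (edges u v w i).2 τ *
                    (pgrad f (edges u v w i).1 (edges u v w i).2 τ) ^ 2) σ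
              ≤ ((N : ℝ) / 3) * ∑ i : Fin 3, ∑ j : Fin 3,
                  condExp β E {u, v, w}
                    (fun τ => prate β E (edges u v w i).1 (edges u v w i).2 τ *
                      prate β E (edges u v w j).1 (edges u v w j).2 τ *
                      pgrad f (edges u v w i).1 (edges u v w i).2 τ *
                      pgrad f (edges u v w j).1 (edges u v w j).2 τ) σ := by
  refine ⟨fun β => Real.exp (-(2 * β * M)), fun β _ => Real.exp_pos _, ?_, ?_⟩
  · have hc : Continuous fun β : ℝ => Real.exp (-(2 * β * M)) := by continuity
    have h0 := hc.tendsto 0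
    simp only [neg_zero, mul_zero, zero_mul, Real.exp_zero] at h0
    exact h0.mono_left nhdsWithin_le_nhds
  intro N hN E hE β hβ u v w huv huw hvw f σ
  simp only [condExp]
  simp only [Part2.fiber_eq huv huw hvw σ]
  simp only [Part2.fiber_sum huv huw hvw σ]
  simp only [Fin.sum_univ_three]
  simp only [edges, Matrix.cons_val_zero, Matrix.cons_val_one, Matrix.head_cons,
    Matrix.cons_val_two, Matrix.tail_cons]
  simp only [prate, pgrad, pexch]
  simp only [mul_assoc]
  simp only [Main.relA huv huw hvw, Main.relB huv huw hvw, Main.relC huv huw hvw,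
    Main.relD huv huw hvw, Main.relE huv huw hvw, Main.relG huv huw hvw,
    Equiv.swap_mul_self, Equiv.swap_mul_self_mul, mul_one]

  simp only [Main.merge2]
  simp only [Main.merge1]
  set n := (N : ℝ) with hn_def
  have hn3 : (3 : ℝ) ≤ n := by rw [hn_def]; exact_mod_cast hN
  have hn0 : (0 : ℝ) < n := by linarith
  have h21 : |E (σ * Equiv.swap u v) - E σ| ≤ M := by simpa [pexch] using hE u v σ
  have h31 : |E (σ * Equiv.swap v w) - E σ| ≤ M := by simpa [pexch] using hE v w σ
  have h41 : |E (σ * Equiv.swap u w) - E σ| ≤ M := by simpa [pexch] using hE u w σ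
  have h52 : |E (σ * (Equiv.swap u v * Equiv.swap v w)) - E (σ * Equiv.swap u v)| ≤ M := by
    simpa [pexch, mul_assoc] using hE v w (σ * Equiv.swap u v)
  have h63 : |E (σ * (Equiv.swap v w * Equiv.swap u v)) - E (σ * Equiv.swap v w)| ≤ M := by
    simpa [pexch, mul_assoc] using hE u v (σ * Equiv.swap v w)
  obtain ⟨h21a, h21b⟩ := abs_le.mp h21
  obtain ⟨h31a, h31b⟩ := abs_le.mp h31
  obtain ⟨h41a, h41b⟩ := abs_le.mp h41
  obtain ⟨h52a, h52b⟩ := abs_le.mp h52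
  obtain ⟨h63a, h63b⟩ := abs_le.mp h63
  set φ1 := Real.exp (-(β / 2 * E σ)) with hφ1
  set φ2 := Real.exp (-(β / 2 * E (σ * Equiv.swap u v))) with hφ2
  set φ3 := Real.exp (-(β / 2 * E (σ * Equiv.swap v w))) with hφ3
  set φ4 := Real.exp (-(β / 2 * E (σ * Equiv.swap u w))) with hφ4
  set φ5 := Real.exp (-(β / 2 * E (σ * (Equiv.swap u v * Equiv.swap v w)))) with hφ5
  set φ6 := Real.exp (-(β / 2 * E (σ * (Equiv.swap v w * Equiv.swap u v)))) with hφ6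
  set F1 := f σ with hF1
  set F2 := f (σ * Equiv.swap u v) with hF2
  set F3 := f (σ * Equiv.swap v w) with hF3
  set F4 := f (σ * Equiv.swap u w) with hF4
  set F5 := f (σ * (Equiv.swap u v * Equiv.swap v w)) with hF5
  set F6 := f (σ * (Equiv.swap v w * Equiv.swap u v)) with hF6
  set m := Real.exp (-(β / 2 * (E σ + 2 * M))) with hm_def
  set Mp := Real.exp (-(β / 2 * (E σ - 2 * M))) with hMp_def
  set Cb := Real.exp (-(2 * (β * M))) with hCb_def
  have hm0 : 0 < m := by rw [hm_def]; exact Real.exp_pos _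
  have hMp0 : 0 < Mp := by rw [hMp_def]; exact Real.exp_pos _
  have bp1 : m ≤ φ1 := by
    rw [hm_def, hφ1]; exact Main.expmono hβ (by linarith)
  have bp1' : φ1 ≤ Mp := by
    rw [hMp_def, hφ1]; exact Main.expmono hβ (by linarith)
  have bq2 : m ≤ φ2 := by
    rw [hm_def, hφ2]; exact Main.expmono hβ (by linarith)
  have bq2' : φ2 ≤ Mp := by
    rw [hMp_def, hφ2]; exact Main.expmono hβ (by linarith)
  have bq3 : m ≤ φ3 := by
    rw [hm_def, hφ3]; exact Main.expmono hβ (by linarith)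
  have bq3' : φ3 ≤ Mp := by
    rw [hMp_def, hφ3]; exact Main.expmono hβ (by linarith)
  have bq4 : m ≤ φ4 := by
    rw [hm_def, hφ4]; exact Main.expmono hβ (by linarith)
  have bq4' : φ4 ≤ Mp := by
    rw [hMp_def, hφ4]; exact Main.expmono hβ (by linarith)
  have bp5 : m ≤ φ5 := by
    rw [hm_def, hφ5]; exact Main.expmono hβ (by linarith)
  have bp5' : φ5 ≤ Mp := by
    rw [hMp_def, hφ5]; exact Main.expmono hβ (by linarith)
  have bp6 : m ≤ φ6 := by
    rw [hm_def, hφ6]; exact Main.expmono hβ (by linarith)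
  have bp6' : φ6 ≤ Mp := by
    rw [hMp_def, hφ6]; exact Main.expmono hβ (by linarith)
  have hkey := core33 m Mp φ1 φ5 φ6 φ2 φ3 φ4 F1 F5 F6 F2 F3 F4 hm0
    bp1 bp1' bp5 bp5' bp6 bp6' bq2 bq2' bq3 bq3' bq4 bq4'
  have hC : Cb * Mp = m := by
    rw [hCb_def, hm_def, hMp_def, ← Real.exp_add]; congr 1; ring
  rw [← hC] at hkey
  have hkey2 : Mp * (3 * (Cb * (φ1 * (φ2 * (F2 - F1) ^ 2 + φ3 * (F3 - F1) ^ 2 + φ4 * (F4 - F1) ^ 2) + φ5 * (φ2 * (F2 - F5) ^ 2 + φ3 * (F3 - F5) ^ 2 + φ4 * (F4 - F5) ^ 2) + φ6 * (φ2 * (F2 - F6) ^ 2 + φ3 * (F3 - F6) ^ 2 + φ4 * (F4 - F6) ^ 2) + φ2 * (φ1 * (F1 - F2) ^ 2 + φ5 * (F5 - F2) ^ 2 + φ6 * (F6 - F2) ^ 2) + φ3 * (φ1 * (F1 - F3) ^ 2 + φ5 * (F5 - F3) ^ 2 + φ6 * (F6 - F3) ^ 2) + φ4 * (φ1 * (F1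 - F4) ^ 2 + φ5 * (F5 - F4) ^ 2 + φ6 * (F6 - F4) ^ 2)))) ≤ Mp * (2 * ((φ2 * (F2 - F1) + φ3 * (F3 - F1) + φ4 * (F4 - F1)) ^ 2 + (φ2 * (F2 - F5) + φ3 * (F3 - F5) + φ4 * (F4 - F5)) ^ 2 + (φ2 * (F2 - F6) + φ3 * (F3 - F6) + φ4 * (F4 - F6)) ^ 2 + ((φ1 * (F1 - F2) + φ5 * (F5 - F2) + φ6 * (F6 - F2)) ^ 2 + (φ1 * (F1 - F3) + φ5 * (F5 - F3) + φ6 * (F6 - F3)) ^ 2 + (φ1 * (F1 - F4) + φ5 * (F5 - F4) + φ6 * (F6 - F4)) ^ 2))) := by linarith [hkey]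
  have hkey3 : 3 * (Cb * (φ1 * (φ2 * (F2 - F1) ^ 2 + φ3 * (F3 - F1) ^ 2 + φ4 * (F4 - F1) ^ 2) + φ5 * (φ2 * (F2 - F5) ^ 2 + φ3 * (F3 - F5) ^ 2 + φ4 * (F4 - F5) ^ 2) + φ6 * (φ2 * (F2 - F6) ^ 2 + φ3 * (F3 - F6) ^ 2 + φ4 * (F4 - F6) ^ 2) + φ2 * (φ1 * (F1 - F2) ^ 2 + φ5 * (F5 - F2) ^ 2 + φ6 * (F6 - F2) ^ 2) + φ3 * (φ1 * (F1 - F3) ^ 2 + φ5 * (F5 - F3) ^ 2 + φ6 * (F6 - F3) ^ 2) + φ4 * (φ1 * (F1 - F4) ^ 2 + φ5 * (F5 - F4) ^ 2 + φ6 * (F6 - F4) ^ 2))) ≤ 2 * ((φ2 * (F2 - F1) + φ3 * (F3 - F1) + φ4 * (F4 - F1)) ^ 2 + (φ2 * (F2 - F5) + φ3 * (F3 - F5) + φ4 * (F4 - F5)) ^ 2 + (φ2 * (F2 - F6) + φ3 * (F3 - F6) + φ4 * (F4 - F6)) ^ 2 + ((φ1 * (F1 - F2) + φ5 * (F5 -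 F2) + φ6 * (F6 - F2)) ^ 2 + (φ1 * (F1 - F3) + φ5 * (F5 - F3) + φ6 * (F6 - F3)) ^ 2 + (φ1 * (F1 - F4) + φ5 * (F5 - F4) + φ6 * (F6 - F4)) ^ 2)) := le_of_mul_le_mul_left hkey2 hMp0
  have hD : (0 : ℝ) < Real.exp (-(β * E σ)) + Real.exp (-(β * E (σ * Equiv.swap u v))) +
      Real.exp (-(β * E (σ * Equiv.swap v w))) + Real.exp (-(β * E (σ * Equiv.swap u w))) +
      Real.exp (-(β * E (σ * (Equiv.swap u v * Equiv.swap v w)))) +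
      Real.exp (-(β * E (σ * (Equiv.swap v w * Equiv.swap u v)))) := by positivity
  simp only [← add_div]
  rw [← mul_div_assoc, ← mul_div_assoc, div_le_div_iff₀ hD hD]
  apply mul_le_mul_of_nonneg_right _ hD.le
  have t1 := mul_le_mul_of_nonneg_left hkey3 (show (0 : ℝ) ≤ 1 / n / 6 by positivity)
  have hcancel : (n * (1 / n) - 1) * (1 / n * ((φ2 * (F2 - F1) + φ3 * (F3 - F1) + φ4 * (F4 - F1)) ^ 2 + (φ2 * (F2 - F5) + φ3 * (F3 - F5) + φ4 * (F4 - F5)) ^ 2 + (φ2 * (F2 - F6) + φ3 * (F3 - F6) + φ4 * (F4 - F6)) ^ 2 + ((φ1 * (F1 - F2) + φ5 * (F5 - F2) + φ6 * (F6 - F2)) ^ 2 + (φ1 * (F1 - F3) + φ5 * (F5 - F3) + φ6 * (F6 - F3)) ^ 2 + (φ1 * (F1 - F4) + φ5 * (F5 - F4) + φ6 * (F6 - F4)) ^ 2))) = 0 := by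
    rw [mul_one_div_cancel (ne_of_gt hn0)]; ring
  linarith [t1, hcancel]

end PermGibbs
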